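/- Let a, b, A, B be real numbers with a > 0, b > 0 and A ≤ B. Then every point of the closed interval [A, B] lies in the closure of the set { (k·a·A + m·b·B)/(k·a + m·b) : k, m ∈ ℕ, k + m > 0 }. -/

import Mathlib

/-- Weighted means `(k·a·A + m·b·B)/(k·a + m·b)` over `k, m ∈ ℕ` with `k + m > 0`
are dense in `[A, B]` whenever `a, b > 0` and `A ≤ B`. -/
theorem weighted_means_dense (a b A B : ℝ) (ha : 0 < a) (hb : 0 < b) (hAB : A ≤ B) :
    ∀ x ∈ Set.Icc A B,
      x ∈ closure {y : ℝ | ∃ k m : ℕ, 0 < k + m ∧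
        y = ((k : ℝ) * a * A + (m : ℝ) * b * B) / ((k : ℝ) * a + (m : ℝ) * b)} := by
  intro x hx
  by_cases hxA : x = A
  · apply subset_closure
    refine ⟨1, 0, by norm_num, ?_⟩
    subst hxA
    push_cast
    field_simp
    ring
  · have hAx : A < x := lt_of_le_of_ne hx.1 (Ne.symm hxA)
    have hABlt : A < B := lt_of_lt_of_le hAx hx.2
    set t : ℝ := (x - A) / (B - A) with ht_def
    have hBA : (0:ℝ) < B - A := by linarith
    have ht0 : 0 < t := div_pos (by linarith) hBA
    have ht1 : t ≤ 1 := by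
      rw [div_le_one hBA]; linarith [hx.2]
    set c : ℝ := b * (1 - t) / (t * a) with hc_def
    have hc : 0 ≤ c := by
      apply div_nonneg
      · nlinarith
      · positivity
    have hca : 0 < c * a + b := by nlinarith
    have hfl : Filter.Tendsto (fun n : ℕ => (⌊c * n⌋₊ : ℝ) / n) Filter.atTop (nhds c) :=
      (tendsto_nat_floor_mul_div_atTop hc).comp tendsto_natCast_atTop_atTop
    have hg : ContinuousAt (fun u : ℝ => (u * a * A + b * B) / (u * a + b)) c := by
      apply ContinuousAt.div
      · fun_prop
      · fun_prop
      · exact ne_of_gt hca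
    have hlim : Filter.Tendsto
        (fun n : ℕ => ((⌊c * n⌋₊ : ℝ) / n * a * A + b * B) / ((⌊c * n⌋₊ : ℝ) / n * a + b))
        Filter.atTop (nhds ((c * a * A + b * B) / (c * a + b))) :=
      (hg.tendsto).comp hfl
    have hval : (c * a * A + b * B) / (c * a + b) = x := by
      have h1 : c * a = b * (1 - t) / t := by
        rw [hc_def]; field_simp
      have h2 : t * (B - A) = x - A := by
        rw [ht_def]; field_simp
      rw [h1]
      rw [div_eq_iff (by rw [h1] at hca; exact ne_of_gt hca)]
      field_simp
      nlinarith
    set y : ℕ → ℝ := fun n =>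
      ((⌊c * n⌋₊ : ℝ) * a * A + (n : ℝ) * b * B) / ((⌊c * n⌋₊ : ℝ) * a + (n : ℝ) * b) with hy
    have hyeq : ∀ n : ℕ, 1 ≤ n →
        ((⌊c * n⌋₊ : ℝ) / n * a * A + b * B) / ((⌊c * n⌋₊ : ℝ) / n * a + b) = y n := by
      intro n hn
      have hn' : (0:ℝ) < n := by exact_mod_cast hn
      rw [hy]
      rw [div_eq_div_iff]
      · field_simp
      · have hfn : (0:ℝ) ≤ (⌊c * n⌋₊ : ℝ) := Nat.cast_nonneg _
        positivity
      · have hfn : (0:ℝ) ≤ (⌊c * n⌋₊ : ℝ) := Nat.cast_nonneg _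
        positivity
    have hylim : Filter.Tendsto y Filter.atTop (nhds x) := by
      rw [← hval]
      apply hlim.congr'
      filter_upwards [Filter.eventually_ge_atTop 1] with n hn
      exact hyeq n hn
    apply mem_closure_of_tendsto hylim
    filter_upwards [Filter.eventually_ge_atTop 1] with n hn
    exact ⟨⌊c * n⌋₊, n, by omega, rfl⟩
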